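/- Fix n ≥ 1 and a type Λ of labels. A labeled ordered partition of {1,…,n} is a finite list ((α_1,ℓ_1),…,(α_s,ℓ_s)) where the α_t are nonempty pairwise disjoint subsets of {1,…,n} with α_1 ∪ ⋯ ∪ α_s = {1,…,n} and ℓ_t ∈ Λ. Let ∼ be the equivalence relation on labeled ordered partitions generated by: (i) ((α_t,ℓ_t))_{t=1}^s ∼ ((α_{θ(t)},ℓ_{θ(t)}))_{t=1}^s for every permutation θ of {1,…,s}; and (ii) whenever 1 ≤ k < n and no single block α_t contains both k and k+1, ((α_t,ℓ_t))_t ∼ ((τ_k(α_t),ℓ_t))_t, where τ_k is the transposition of k and k+1 applied elementwise to each block. Call an ordered partition (α_1,…,α_s) canonical if there are k_1 ≤ k_2 ≤ ⋯ ≤ k_s with k_1 + ⋯ + k_s = n and α_1 = {1,…,k_1}, α_2 = {k_1+1,…,k_1+k_2}, …, α_s = {n−k_s+1,…,n}. Then: every labeled ordered partition (P, L) is ∼-equivalent to a labeled ordered partition (P_λ, L') whose underlying ordered partition P_λ is canonical; moreover P_λ is unique, i.e. if (P, L) ∼ (P', L') and both underlying ordered partitions are canonical then P = P'. -/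

import Mathlib

/-! Statement 14: every labeled ordered partition of `{1,…,n}` is equivalent — under
permutations of the blocks and allowed transpositions of consecutive labels — to one with a
canonical underlying ordered partition, and that canonical partition is unique. -/

/-- A list of labeled blocks: subsets of `{1,…,n}` (modelled as `Finset (Fin n)`) with labels. -/
abbrev LPart (n : ℕ) (Λ : Type*) := List (Finset (Fin n) × Λ)

/-- A labeled ordered partition of `{1,…,n}`: the blocks are nonempty, pairwise disjoint, and
their union is everything. -/
def IsLabeledPartition {n : ℕ} {Λ : Type*} (l : LPart n Λ) : Prop :=
  (∀ p ∈ l, p.1.Nonempty) ∧ l.Pairwise (fun p q => Disjoint p.1 q.1) ∧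
    l.foldr (fun p acc => p.1 ∪ acc) ∅ = Finset.univ

/-- Elementary moves generating the equivalence: (i) permuting the list of labeled blocks;
(ii) applying an allowed transposition `τ_k` of two consecutive labels `k, k+1` which do not
both lie in a single block, to every block. -/
inductive PMove (n : ℕ) (Λ : Type*) : LPart n Λ → LPart n Λ → Prop
  | perm (l₁ l₂ : LPart n Λ) (h : l₁.Perm l₂) : PMove n Λ l₁ l₂
  | transp (l : LPart n Λ) (j : ℕ) (hj : j + 1 < n)
      (hallow : ∀ p ∈ l, ¬((⟨j, by omega⟩ : Fin n) ∈ p.1 ∧ (⟨j + 1, hj⟩ : Fin n) ∈ p.1)) :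
      PMove n Λ l
        (l.map fun p =>
          (p.1.image (Equiv.swap (⟨j, by omega⟩ : Fin n) ⟨j + 1, hj⟩), p.2))

/-- The blocks of the canonical ordered partition with block sizes `ks`, starting at
offset `off`: consecutive intervals. -/
def canonicalBlocks (n : ℕ) : List ℕ → ℕ → List (Finset (Fin n))
  | [], _ => []
  | K :: ks, off =>
      (Finset.univ.filter fun i : Fin n => off ≤ (i : ℕ) ∧ (i : ℕ) < off + K) ::
        canonicalBlocks n ks (off + K)

/-- An ordered partition is canonical if its blocks are the consecutive intervals determined by
a nondecreasing list of positive sizes summing to `n`. -/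
def IsCanonical {n : ℕ} (l : List (Finset (Fin n))) : Prop :=
  ∃ ks : List ℕ, (∀ K ∈ ks, 0 < K) ∧ ks.Pairwise (· ≤ ·) ∧ ks.sum = n ∧
    l = canonicalBlocks n ks 0

section Aux
variable {n : ℕ} {Λ : Type*}
open Finset

lemma mem_foldr_union (l : LPart n Λ) (a : Fin n) :
    a ∈ l.foldr (fun p acc => p.1 ∪ acc) ∅ ↔ ∃ p ∈ l, a ∈ p.1 := by
  induction l with
  | nil => simp
  | cons q l ih => simp [ih]

lemma isLP_perm {l l' : LPart n Λ} (h : l.Perm l') (hl : IsLabeledPartition l) :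
    IsLabeledPartition l' := by
  obtain ⟨h1, h2, h3⟩ := hl
  refine ⟨fun p hp => h1 p (h.mem_iff.mpr hp), h2.perm h (fun hxy => hxy.symm), ?_⟩
  ext a
  have : a ∈ l'.foldr (fun p acc => p.1 ∪ acc) ∅ ↔ a ∈ l.foldr (fun p acc => p.1 ∪ acc) ∅ := by
    rw [mem_foldr_union, mem_foldr_union]
    exact ⟨fun ⟨p, hp, ha⟩ => ⟨p, h.mem_iff.mpr hp, ha⟩, fun ⟨p, hp, ha⟩ => ⟨p, h.mem_iff.mp hp, ha⟩⟩
  rw [this, h3]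

lemma isLP_image {l : LPart n Λ} (hl : IsLabeledPartition l) (e : Equiv.Perm (Fin n)) :
    IsLabeledPartition (l.map fun p => (p.1.image e, p.2)) := by
  obtain ⟨h1, h2, h3⟩ := hl
  refine ⟨?_, ?_, ?_⟩
  · rintro p hp
    simp only [List.mem_map] at hp
    obtain ⟨q, hq, rfl⟩ := hp
    exact (h1 q hq).image _
  · rw [List.pairwise_map]
    exact h2.imp fun hd => Finset.disjoint_image e.injective |>.mpr hd
  · ext a
    simp only [mem_univ, iff_true, mem_foldr_union, List.mem_map]
    have h4 : e.symm a ∈ l.foldr (fun p acc => p.1 ∪ acc) ∅ := by rw [h3]; exact mem_univ _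
    rw [mem_foldr_union] at h4
    obtain ⟨q, hq, hq'⟩ := h4
    exact ⟨_, ⟨q, hq, rfl⟩, by
      simp only [Finset.mem_image]
      exact ⟨e.symm a, hq', by simp⟩⟩

/-- the index of the block containing `i` -/
def colIdx (B : List (Finset (Fin n))) (i : Fin n) : ℕ :=
  B.findIdx (fun b => decide (i ∈ b))

lemma col_lt {B : List (Finset (Fin n))} (hcov : ∀ i : Fin n, ∃ b ∈ B, i ∈ b) (i : Fin n) :
    colIdx B i < B.length := by
  obtain ⟨b, hb, hib⟩ := hcov i
  exact List.findIdx_lt_length.mpr ⟨b, hb, by simpa using hib⟩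

lemma col_mem {B : List (Finset (Fin n))} (hcov : ∀ i : Fin n, ∃ b ∈ B, i ∈ b) (i : Fin n) :
    i ∈ B[colIdx B i]'(col_lt hcov i) := by
  have := @List.findIdx_getElem _ (fun b => decide (i ∈ b)) B (col_lt hcov i)
  simp at this
  exact this

lemma col_eq_iff {B : List (Finset (Fin n))} (hdisj : B.Pairwise Disjoint)
    (hcov : ∀ i : Fin n, ∃ b ∈ B, i ∈ b) (i : Fin n) {t : ℕ} (ht : t < B.length) :
    colIdx B i = t ↔ i ∈ B[t] := by
  constructor
  · rintro rfl; exact col_mem hcov i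
  · intro hit
    rcases lt_trichotomy (colIdx B i) t with h | h | h
    · exfalso
      have hd : Disjoint (B[colIdx B i]'(col_lt hcov i)) B[t] :=
        List.pairwise_iff_getElem.mp hdisj _ _ _ _ h
      exact (Finset.disjoint_left.mp hd (col_mem hcov i)) hit
    · exact h
    · exfalso
      have := List.not_of_lt_findIdx (p := fun b => decide (i ∈ b)) (xs := B) (i := t) h
      simp only [decide_eq_false_iff_not] at this
      exact this hit

lemma findIdx_map' {α β : Type*} (f : α → β) (p : β → Bool) (l : List α) :
    List.findIdx p (l.map f) = List.findIdx (fun a => p (f a)) l := by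
  induction l with
  | nil => rfl
  | cons a l ih => simp [List.findIdx_cons, ih]

lemma colIdx_map_image (B : List (Finset (Fin n))) (e : Equiv.Perm (Fin n)) (i : Fin n) :
    colIdx (B.map fun b => b.image e) i = colIdx B (e.symm i) := by
  unfold colIdx
  rw [findIdx_map']
  congr 1
  funext b
  congr 1
  simp only [eq_iff_iff, Finset.mem_image]
  constructor
  · rintro ⟨x, hx, rfl⟩; simpa using hx
  · intro h; exact ⟨e.symm i, h, by simp⟩

lemma down_closed_eq {S : Finset (Fin n)} (h : ∀ i j : Fin n, i ≤ j → j ∈ S → i ∈ S)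
    (i : Fin n) : i ∈ S ↔ (i : ℕ) < S.card := by
  constructor
  · intro hi
    have hsub : Finset.Iic i ⊆ S := fun k hk => h k i (Finset.mem_Iic.mp hk) hi
    have := Finset.card_le_card hsub
    rw [Fin.card_Iic] at this
    omega
  · intro hi
    by_contra hmem
    have hsub : S ⊆ Finset.Iio i := by
      intro k hk
      rw [Finset.mem_Iio]
      by_contra hlt
      exact hmem (h i k (le_of_not_gt hlt) hk)
    have := Finset.card_le_card hsub
    rw [Fin.card_Iio] at this
    omega

lemma adj_mono (f : Fin n → ℕ)
    (h : ∀ j (hj : j + 1 < n), f ⟨j, by omega⟩ ≤ f ⟨j + 1, hj⟩) : Monotone f := by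
  have key : ∀ m (hm : m < n) (i : Fin n), (i : ℕ) ≤ m → f i ≤ f ⟨m, hm⟩ := by
    intro m
    induction m with
    | zero =>
      intro hm i hi
      have hi0 : i = ⟨0, hm⟩ := Fin.ext (by simpa using hi)
      rw [hi0]
    | succ m ih =>
      intro hm i hi
      rcases Nat.lt_or_ge (i : ℕ) (m + 1) with h' | h'
      · exact le_trans (ih (by omega) i (by omega)) (h m hm)
      · have hi0 : i = ⟨m + 1, hm⟩ := Fin.ext (by simp; omega)
        rw [hi0]
  intro i k hik
  have := key (k : ℕ) k.isLt i hik
  simpa using this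

lemma wsum_le (l : LPart n Λ) :
    ∑ i : Fin n, colIdx (l.map Prod.fst) i * (i : ℕ) ≤ l.length * n * n := by
  calc ∑ i : Fin n, colIdx (l.map Prod.fst) i * (i : ℕ)
      ≤ ∑ _i : Fin n, l.length * n := by
        refine Finset.sum_le_sum fun i _ => ?_
        have h1 : colIdx (l.map Prod.fst) i ≤ l.length := by
          have := List.findIdx_le_length (p := fun b => decide (i ∈ b)) (xs := l.map Prod.fst)
          simpa [colIdx] using this
        exact Nat.mul_le_mul h1 (le_of_lt i.isLt)
    _ = n * (l.length * n) := by simp [Finset.sum_const, mul_comm]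
    _ = l.length * n * n := by ring

lemma cov_of_LP {l : LPart n Λ} (hl : IsLabeledPartition l) :
    ∀ i : Fin n, ∃ b ∈ l.map Prod.fst, i ∈ b := by
  intro i
  have : i ∈ l.foldr (fun p acc => p.1 ∪ acc) ∅ := by rw [hl.2.2]; exact Finset.mem_univ _
  rw [mem_foldr_union] at this
  obtain ⟨p, hp, hip⟩ := this
  exact ⟨p.1, List.mem_map_of_mem hp, hip⟩

lemma disj_of_LP {l : LPart n Λ} (hl : IsLabeledPartition l) :
    (l.map Prod.fst).Pairwise Disjoint := by
  rw [List.pairwise_map]; exact hl.2.1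

lemma bubble (fuel : ℕ) : ∀ (l : LPart n Λ), IsLabeledPartition l →
    l.length * n * n + 1 ≤ (∑ i : Fin n, colIdx (l.map Prod.fst) i * (i : ℕ)) + fuel →
    ∃ l', IsLabeledPartition l' ∧ Relation.EqvGen (PMove n Λ) l l' ∧
      (l'.map fun p => p.1.card) = (l.map fun p => p.1.card) ∧
      Monotone (colIdx (l'.map Prod.fst)) := by
  induction fuel with
  | zero =>
    intro l hl hb
    have := wsum_le l
    omega
  | succ fuel ih =>
    intro l hl hb
    set B := l.map Prod.fst with hB
    have hcov := cov_of_LP hl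
    have hdisj := disj_of_LP hl
    by_cases hmono : ∀ j (hj : j + 1 < n), colIdx B ⟨j, by omega⟩ ≤ colIdx B ⟨j + 1, hj⟩
    · exact ⟨l, hl, Relation.EqvGen.refl l, rfl, adj_mono _ hmono⟩
    push_neg at hmono
    obtain ⟨j, hj, hinv⟩ := hmono
    set a : Fin n := ⟨j, by omega⟩ with ha
    set b : Fin n := ⟨j + 1, hj⟩ with hbdef
    have hallow : ∀ p ∈ l, ¬(a ∈ p.1 ∧ b ∈ p.1) := by
      rintro p hp ⟨hpa, hpb⟩
      obtain ⟨t, ht, rfl⟩ := List.getElem_of_mem hp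
      have hBt : t < B.length := by simpa [hB] using ht
      have e1 : colIdx B a = t := (col_eq_iff hdisj hcov a hBt).mpr (by simpa [hB] using hpa)
      have e2 : colIdx B b = t := (col_eq_iff hdisj hcov b hBt).mpr (by simpa [hB] using hpb)
      omega
    have hmove : PMove n Λ l (l.map fun p => (p.1.image (Equiv.swap a b), p.2)) :=
      PMove.transp l j hj hallow
    set s := Equiv.swap a b with hs
    set l₂ := l.map fun p => (p.1.image s, p.2) with hl₂
    have hl₂p : IsLabeledPartition l₂ := isLP_image hl s
    have hB₂ : l₂.map Prod.fst = B.map fun bl => bl.image s := by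
      rw [hl₂, hB, List.map_map, List.map_map]; rfl
    have hcol₂ : ∀ i, colIdx (l₂.map Prod.fst) i = colIdx B (s i) := by
      intro i
      rw [hB₂, colIdx_map_image]
      simp only [hs, Equiv.symm_swap]
    have hne : a ≠ b := by simp [ha, hbdef, Fin.ext_iff]
    have hsum2 : ∀ f : Fin n → ℕ, ∑ i : Fin n, f i
        = f a + (f b + ∑ i ∈ (Finset.univ.erase a).erase b, f i) := by
      intro f
      rw [Finset.add_sum_erase _ f (Finset.mem_erase.mpr ⟨hne.symm, Finset.mem_univ b⟩),
        Finset.add_sum_erase _ f (Finset.mem_univ a)]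
    have hreindex : ∑ i : Fin n, colIdx B (s i) * (i : ℕ)
        = ∑ i : Fin n, colIdx B i * ((s i : Fin n) : ℕ) := by
      refine Fintype.sum_equiv s _ _ fun i => ?_
      simp [hs, Equiv.swap_apply_self]
    have hincr : (∑ i : Fin n, colIdx B i * (i : ℕ)) + 1
        ≤ ∑ i : Fin n, colIdx B i * ((s i : Fin n) : ℕ) := by
      rw [hsum2 (fun i => colIdx B i * (i : ℕ)), hsum2 (fun i => colIdx B i * ((s i : Fin n) : ℕ))]
      have hrest : ∑ i ∈ (Finset.univ.erase a).erase b, colIdx B i * ((s i : Fin n) : ℕ)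
          = ∑ i ∈ (Finset.univ.erase a).erase b, colIdx B i * (i : ℕ) := by
        refine Finset.sum_congr rfl fun i hi => ?_
        have h1 : i ≠ b := (Finset.mem_erase.mp hi).1
        have h2 : i ≠ a := (Finset.mem_erase.mp (Finset.mem_erase.mp hi).2).1
        rw [hs, Equiv.swap_apply_of_ne_of_ne h2 h1]
      rw [hrest, hs, Equiv.swap_apply_left, Equiv.swap_apply_right]
      have hav : (a : ℕ) = j := rfl
      have hbv : (b : ℕ) = j + 1 := rfl
      rw [hav, hbv, Nat.mul_succ, Nat.mul_succ]
      omega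
    have hlen₂ : l₂.length = l.length := by simp [hl₂]
    have hcards : (l₂.map fun p => p.1.card) = (l.map fun p => p.1.card) := by
      rw [hl₂, List.map_map]
      refine List.map_congr_left fun p _ => ?_
      simp [Finset.card_image_of_injective _ s.injective]
    have hwle : l₂.length * n * n + 1 ≤ (∑ i : Fin n, colIdx (l₂.map Prod.fst) i * (i : ℕ)) + fuel := by
      have heq : ∑ i : Fin n, colIdx (l₂.map Prod.fst) i * (i : ℕ)
          = ∑ i : Fin n, colIdx B (s i) * (i : ℕ) :=
        Finset.sum_congr rfl fun i _ => by rw [hcol₂]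
      rw [hlen₂, heq, hreindex]
      omega
    obtain ⟨l', h1, h2, h3, h4⟩ := ih l₂ hl₂p hwle
    exact ⟨l', h1, Relation.EqvGen.trans _ _ _ (Relation.EqvGen.rel _ _ hmove) h2,
      h3.trans hcards, h4⟩

lemma cb_length (ks : List ℕ) (off : ℕ) : (canonicalBlocks n ks off).length = ks.length := by
  induction ks generalizing off with
  | nil => rfl
  | cons K ks ih => simp [canonicalBlocks, ih]

lemma cb_getElem : ∀ (ks : List ℕ) (off t : ℕ) (ht : t < ks.length),
    (canonicalBlocks n ks off)[t]'(by rw [cb_length]; exact ht)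
      = Finset.univ.filter fun i : Fin n =>
          off + (ks.take t).sum ≤ (i : ℕ) ∧ (i : ℕ) < off + (ks.take (t + 1)).sum := by
  intro ks
  induction ks with
  | nil => intro off t ht; simp at ht
  | cons K ks ih =>
    intro off t ht
    cases t with
    | zero =>
      simp only [canonicalBlocks, List.getElem_cons_zero]
      ext i
      simp only [Finset.mem_filter]
      simp only [Finset.mem_filter, Finset.mem_univ, true_and, List.take_zero, List.sum_nil,
        List.take_succ_cons, List.take_zero, List.sum_cons]
      omega
    | succ t =>
      simp only [canonicalBlocks, List.getElem_cons_succ]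
      rw [ih (off + K) t (by simpa using ht)]
      ext i
      simp only [Finset.mem_filter]
      simp only [Finset.mem_filter, Finset.mem_univ, true_and, List.take_succ_cons,
        List.sum_cons]
      omega

lemma card_interval (off K : ℕ) (h : off + K ≤ n) :
    (Finset.univ.filter fun i : Fin n => off ≤ (i : ℕ) ∧ (i : ℕ) < off + K).card = K := by
  have hlt : ∀ m ∈ Finset.Ico off (off + K), m < n := fun m hm => by
    rw [Finset.mem_Ico] at hm; omega
  have heq : (Finset.univ.filter fun i : Fin n => off ≤ (i : ℕ) ∧ (i : ℕ) < off + K)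
      = (Finset.Ico off (off + K)).attachFin hlt := by
    ext i
    simp [Finset.mem_attachFin, Finset.mem_Ico]
  rw [heq, Finset.card_attachFin, Nat.card_Ico]
  omega

lemma cb_map_card : ∀ (ks : List ℕ) (off : ℕ), off + ks.sum ≤ n →
    (canonicalBlocks n ks off).map Finset.card = ks := by
  intro ks
  induction ks with
  | nil => intro off _; rfl
  | cons K ks ih =>
    intro off h
    simp only [List.sum_cons] at h
    simp only [canonicalBlocks, List.map_cons]
    rw [card_interval off K (by omega), ih (off + K) (by omega)]

lemma canonical_of_monotone {l : LPart n Λ} (hl : IsLabeledPartition l)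
    (hmono : Monotone (colIdx (l.map Prod.fst)))
    (hsorted : (l.map fun p => p.1.card).Pairwise (· ≤ ·)) :
    IsCanonical (l.map Prod.fst) := by
  set B := l.map Prod.fst with hB
  set c := colIdx B with hc
  set ks := B.map Finset.card with hks
  have hcov := cov_of_LP hl
  have hdisj := disj_of_LP hl
  have hkslen : ks.length = B.length := by simp [hks]
  have hmapeq : (l.map fun p => p.1.card) = ks := by rw [hks, hB, List.map_map]; rfl
  have G1 : ∀ t, t ≤ B.length → (Finset.univ.filter fun i => c i < t).card = (ks.take t).sum := by
    intro t
    induction t with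
    | zero => simp
    | succ t iht =>
      intro ht
      have ht' : t < B.length := by omega
      have hdis : Disjoint (Finset.univ.filter fun i => c i < t)
          (Finset.univ.filter fun i => c i = t) := by
        rw [Finset.disjoint_left]
        intro i hi1 hi2
        simp only [Finset.mem_filter] at hi1 hi2
        omega
      have hun : (Finset.univ.filter fun i => c i < t + 1)
          = (Finset.univ.filter fun i => c i < t) ∪ (Finset.univ.filter fun i => c i = t) := by
        ext i
        simp only [Finset.mem_filter, Finset.mem_univ, true_and, Finset.mem_union]
        omega
      have hfib : (Finset.univ.filter fun i => c i = t) = B[t] := by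
        ext i
        simp only [Finset.mem_filter, Finset.mem_univ, true_and]
        exact col_eq_iff hdisj hcov i ht'
      rw [List.sum_take_succ _ t (by omega : t < ks.length), ← iht (by omega), hun,
        Finset.card_union_of_disjoint hdis, hfib]
      congr 1
      show B[t].card = ks[t]'(by omega)
      simp [hks]
  have key : ∀ t, t ≤ B.length → ∀ i : Fin n, c i < t ↔ (i : ℕ) < (ks.take t).sum := by
    intro t ht i
    rw [← G1 t ht]
    have hd : ∀ i k : Fin n, i ≤ k →
        k ∈ (Finset.univ.filter fun i => c i < t) → i ∈ (Finset.univ.filter fun i => c i < t) := by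
      intro i k hik hk
      simp only [Finset.mem_filter, Finset.mem_univ, true_and] at hk ⊢
      exact lt_of_le_of_lt (hmono hik) hk
    have := down_closed_eq hd i
    simpa using this
  have hsum : ks.sum = n := by
    have h1 := G1 B.length le_rfl
    have h2 : (Finset.univ.filter fun i => c i < B.length) = Finset.univ := by
      ext i
      simp [col_lt hcov i]
      exact col_lt hcov i
    rw [h2] at h1
    have h3 : ks.take B.length = ks := by
      rw [← hkslen]
      exact List.take_length
    rw [h3] at h1
    simpa using h1.symm
  refine ⟨ks, ?_, ?_, hsum, ?_⟩
  · intro K hK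
    rw [hks] at hK
    simp only [List.mem_map] at hK
    obtain ⟨bl, hbl, rfl⟩ := hK
    rw [hB] at hbl
    simp only [List.mem_map] at hbl
    obtain ⟨p, hp, rfl⟩ := hbl
    exact Finset.card_pos.mpr (hl.1 p hp)
  · rw [hmapeq] at hsorted
    exact hsorted
  · refine List.ext_get (by rw [cb_length, hkslen]) fun t h1 h2 => ?_
    have ht : t < B.length := h1
    have htks : t < ks.length := by omega
    simp only [List.get_eq_getElem]
    rw [cb_getElem ks 0 t htks]
    ext i
    have k1 := key t (by omega) i
    have k2 := key (t + 1) (by omega) i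
    have hmem : c i = t ↔ i ∈ B[t] := col_eq_iff hdisj hcov i ht
    simp only [Finset.mem_filter, Finset.mem_univ, true_and, zero_add]
    rw [← hmem]
    omega

lemma cards_invariant {l₁ l₂ : LPart n Λ} (h : Relation.EqvGen (PMove n Λ) l₁ l₂) :
    (↑(l₁.map fun p => p.1.card) : Multiset ℕ) = ↑(l₂.map fun p => p.1.card) := by
  induction h with
  | rel x y hxy =>
    cases hxy with
    | perm l₂' h => exact Multiset.coe_eq_coe.mpr (h.map _)
    | transp j hj hallow =>
      congr 1
      rw [List.map_map]
      refine (List.map_congr_left fun p _ => ?_)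
      simp [Finset.card_image_of_injective _ (Equiv.swap _ _).injective]
  | refl _ => rfl
  | symm _ _ _ ih => exact ih.symm
  | trans _ _ _ _ _ ih1 ih2 => exact ih1.trans ih2

end Aux

/-- Every labeled ordered partition is equivalent (under the equivalence
generated by the moves) to one whose underlying ordered partition is canonical, and the
canonical representative of the underlying ordered partition is unique. -/
theorem stmt_14 (n : ℕ) (hn : 1 ≤ n) (Λ : Type*) :
    (∀ l : LPart n Λ, IsLabeledPartition l →
      ∃ l' : LPart n Λ, IsLabeledPartition l' ∧ Relation.EqvGen (PMove n Λ) l l' ∧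
        IsCanonical (l'.map Prod.fst)) ∧
    (∀ l₁ l₂ : LPart n Λ, IsLabeledPartition l₁ → IsLabeledPartition l₂ →
      Relation.EqvGen (PMove n Λ) l₁ l₂ →
      IsCanonical (l₁.map Prod.fst) → IsCanonical (l₂.map Prod.fst) →
      l₁.map Prod.fst = l₂.map Prod.fst) := by
  constructor
  · intro l hl
    set le : (Finset (Fin n) × Λ) → (Finset (Fin n) × Λ) → Bool :=
      fun p q => decide (p.1.card ≤ q.1.card) with hle
    set l₀ := l.mergeSort le with hl₀def
    have hperm : l₀.Perm l := List.mergeSort_perm l le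
    have hl₀ : IsLabeledPartition l₀ := isLP_perm hperm.symm hl
    have hsorted₀ : (l₀.map fun p => p.1.card).Pairwise (· ≤ ·) := by
      have h := List.pairwise_mergeSort (le := le)
        (fun a b c hab hbc => by simp only [hle, decide_eq_true_eq] at *; omega)
        (fun a b => by simp only [hle, Bool.or_eq_true, decide_eq_true_eq]; omega) l
      rw [List.pairwise_map]
      refine h.imp ?_
      intro a b hab
      simpa [hle] using hab
    obtain ⟨l', h1, h2, h3, h4⟩ := bubble (l₀.length * n * n + 1) l₀ hl₀ (by omega)
    refine ⟨l', h1, ?_, ?_⟩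
    · exact Relation.EqvGen.trans _ _ _
        (Relation.EqvGen.rel _ _ (PMove.perm l l₀ hperm.symm)) h2
    · exact canonical_of_monotone h1 h4 (h3 ▸ hsorted₀)
  · intro l₁ l₂ hl₁ hl₂ heqv hc₁ hc₂
    obtain ⟨ks₁, hp₁, hs₁, hsum₁, hb₁⟩ := hc₁
    obtain ⟨ks₂, hp₂, hs₂, hsum₂, hb₂⟩ := hc₂
    have hk₁ : (l₁.map fun p => p.1.card) = ks₁ := by
      have h := cb_map_card (n := n) ks₁ 0 (by omega)
      rw [← hb₁] at h
      rw [← h, List.map_map]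
      rfl
    have hk₂ : (l₂.map fun p => p.1.card) = ks₂ := by
      have h := cb_map_card (n := n) ks₂ 0 (by omega)
      rw [← hb₂] at h
      rw [← h, List.map_map]
      rfl
    have hm := cards_invariant heqv
    rw [hk₁, hk₂] at hm
    have hks : ks₁ = ks₂ := List.Perm.eq_of_pairwise' hs₁ hs₂ (Multiset.coe_eq_coe.mp hm)
    rw [hb₁, hb₂, hks]
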